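/- arXiv:2201.09453 — 2 statements merged into one kernel-verified Lean document; each statement's English description precedes it below -/
import Mathlib

section
/- For all real parameters a > 0, b > 1, T > 0, the saturated Nussbaum function N_{a,b,T} is continuous on ℝ. -/
open Real Filter Set

/-- Breakpoints `s_n(b,T) = T·π·(b^n − 1)/(b − 1)`. -/
noncomputable def brk (b T : ℝ) (n : ℕ) : ℝ := T * Real.pi * (b ^ n - 1) / (b - 1)

/-- Index of the segment containing `x ≥ 0`: the unique `m` with `s_m ≤ x < s_{m+1}`
(for `b > 1`, `T > 0`). -/
noncomputable def seg (b T x : ℝ) : ℕ := sInf {n : ℕ | x < brk b T (n + 1)}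

/-- The saturated Nussbaum function `N_{a,b,T}`: on `[s_{n−1}, s_n)` (with `m = n − 1`)
it equals `(−1)^m·a·cos((χ − s_m)/(b^m·T))`, extended evenly to `χ < 0`. -/
noncomputable def satN (a b T : ℝ) (χ : ℝ) : ℝ :=
  (-1 : ℝ) ^ (seg b T |χ|) * a *
    Real.cos ((|χ| - brk b T (seg b T |χ|)) / (b ^ (seg b T |χ|) * T))

/-- The integrated function `G_{a,b,T}(χ) = ∫_0^χ N_{a,b,T}(τ) dτ`. -/
noncomputable def satG (a b T : ℝ) (χ : ℝ) : ℝ := ∫ τ in (0:ℝ)..χ, satN a b T τ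

section aux

variable {b T : ℝ} (hb : 1 < b) (hT : 0 < T)

lemma brk_succ_sub (hb : 1 < b) (n : ℕ) :
    brk b T (n + 1) - brk b T n = T * Real.pi * b ^ n := by
  have hb1 : b - 1 ≠ 0 := by linarith
  rw [brk, brk, ← sub_div, div_eq_iff hb1]
  ring

lemma brk_strictMono (hb : 1 < b) (hT : 0 < T) : StrictMono (brk b T) := by
  apply strictMono_nat_of_lt_succ
  intro n
  have h := brk_succ_sub (T := T) hb n
  have hpos : 0 < T * Real.pi * b ^ n := by
    have : (0:ℝ) < b ^ n := pow_pos (by linarith) n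
    positivity
  linarith

lemma brk_ge (hb : 1 < b) (hT : 0 < T) (n : ℕ) : T * Real.pi * n ≤ brk b T n := by
  induction n with
  | zero => simp [brk]
  | succ k ih =>
    have h := brk_succ_sub (T := T) hb k
    have hbk : (1:ℝ) ≤ b ^ k := one_le_pow₀ (le_of_lt hb)
    have hTpi : 0 < T * Real.pi := by positivity
    have : T * Real.pi * 1 ≤ T * Real.pi * b ^ k := by nlinarith
    push_cast
    nlinarith

lemma seg_nonempty (hb : 1 < b) (hT : 0 < T) (x : ℝ) :
    {n : ℕ | x < brk b T (n + 1)}.Nonempty := by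
  obtain ⟨n, hn⟩ := exists_nat_gt (x / (T * Real.pi))
  have hTpi : 0 < T * Real.pi := by positivity
  refine ⟨n, ?_⟩
  have h1 : x < T * Real.pi * n := by
    rw [div_lt_iff₀ hTpi] at hn; linarith [mul_comm (T * Real.pi) (n:ℝ)]
  have h2 : T * Real.pi * n ≤ T * Real.pi * (n + 1) := by nlinarith
  have h3 := brk_ge hb hT (n + 1)
  calc x < T * Real.pi * n := h1
    _ ≤ T * Real.pi * (n + 1) := h2
    _ ≤ brk b T (n + 1) := by exact_mod_cast h3

lemma seg_lt (hb : 1 < b) (hT : 0 < T) (x : ℝ) : x < brk b T (seg b T x + 1) :=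
  Nat.sInf_mem (seg_nonempty hb hT x)

lemma seg_eq (hb : 1 < b) (hT : 0 < T) {x : ℝ} {m : ℕ}
    (h1 : brk b T m ≤ x) (h2 : x < brk b T (m + 1)) : seg b T x = m := by
  refine le_antisymm (Nat.sInf_le h2) ?_
  refine le_csInf ⟨m, h2⟩ ?_
  intro n hn
  by_contra hlt
  push_neg at hlt
  have : brk b T (n + 1) ≤ brk b T m := (brk_strictMono hb hT).monotone hlt
  exact absurd hn (by simp only [mem_setOf_eq]; linarith)

lemma seg_eq_zero (hb : 1 < b) (hT : 0 < T) {x : ℝ} (h : x < brk b T 1) : seg b T x = 0 :=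
  Nat.le_zero.mp (Nat.sInf_le h)

end aux

/-- the saturated Nussbaum function `N_{a,b,T}` is continuous on ℝ. -/
theorem satN_continuous (a b T : ℝ) (ha : 0 < a) (hb : 1 < b) (hT : 0 < T) :
    Continuous (satN a b T) := by
  have hb0 : (0:ℝ) < b := by linarith
  set f : ℕ → ℝ → ℝ :=
    fun m x => (-1:ℝ) ^ m * a * Real.cos ((x - brk b T m) / (b ^ m * T)) with hfdef
  have hfc : ∀ m, Continuous (f m) := by
    intro m
    apply Continuous.mul (continuous_const)
    exact Real.continuous_cos.comp ((continuous_id.sub continuous_const).div_const _)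
  set g : ℝ → ℝ := fun x => f (seg b T x) x with hgdef
  have hg : Continuous g := by
    rw [continuous_iff_continuousAt]
    intro x
    have hx2 : x < brk b T (seg b T x + 1) := seg_lt hb hT x
    rcases eq_or_ne (seg b T x) 0 with h0 | h0
    · -- seg x = 0 : constant on Iio (brk 1)
      apply (hfc 0).continuousAt.congr
      have hmem : Iio (brk b T 1) ∈ nhds x := Iio_mem_nhds (by rw [h0] at hx2; exact hx2)
      filter_upwards [hmem] with y hy
      simp only [hgdef]
      rw [seg_eq_zero hb hT hy]
    · obtain ⟨k, h0⟩ := Nat.exists_eq_succ_of_ne_zero h0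
      rw [h0] at hx2
      have hx1 : brk b T (k + 1) ≤ x := by
        by_contra hlt
        push_neg at hlt
        have h2 : seg b T x ≤ k := Nat.sInf_le (s := {n : ℕ | x < brk b T (n + 1)}) hlt
        omega
      rcases eq_or_lt_of_le hx1 with heq | hlt
      · -- x is the breakpoint brk (k+1)
        rw [continuousAt_iff_continuous_left_right]
        constructor
        · -- left: agrees with f k on Ioc (brk k) x
          have hbk : brk b T k < x := by
            rw [← heq]; exact brk_strictMono hb hT (Nat.lt_succ_self k)
          have hmem : Ioc (brk b T k) x ∈ nhdsWithin x (Iic x) := by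
            rw [← Ioi_inter_Iic]
            exact inter_mem (mem_nhdsWithin_of_mem_nhds (Ioi_mem_nhds hbk))
              self_mem_nhdsWithin
          have hmatch : g x = f k x := by
            simp only [hgdef, hfdef, h0]
            have hdiff : x - brk b T k = T * Real.pi * b ^ k := by
              rw [← heq]; exact brk_succ_sub hb k
            have hdiff0 : x - brk b T (k + 1) = 0 := by rw [← heq]; ring
            have hbkT : b ^ k * T ≠ 0 := by positivity
            rw [hdiff0, hdiff, zero_div, Real.cos_zero,
              show T * Real.pi * b ^ k / (b ^ k * T) = Real.pi by field_simp,
              Real.cos_pi, pow_succ]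
            ring
          apply ContinuousWithinAt.congr_of_eventuallyEq
            ((hfc k).continuousAt.continuousWithinAt) ?_ hmatch
          filter_upwards [hmem] with y hy
          rcases eq_or_lt_of_le hy.2 with rfl | hylt
          · exact hmatch
          · simp only [hgdef]
            rw [seg_eq hb hT (le_of_lt hy.1) (heq ▸ hylt)]
        · -- right: agrees with f (k+1) on Ico x (brk (k+2))
          have hmem : Ico x (brk b T (k + 2)) ∈ nhdsWithin x (Ici x) :=
            Ico_mem_nhdsGE_of_mem ⟨le_refl x, hx2⟩
          apply ContinuousWithinAt.congr_of_eventuallyEq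
            ((hfc (k+1)).continuousAt.continuousWithinAt) ?_
            (by simp only [hgdef, h0])
          filter_upwards [hmem] with y hy
          simp only [hgdef]
          rw [seg_eq hb hT (heq ▸ hy.1) hy.2]
      · -- x is in the open interval (brk (k+1), brk (k+2))
        apply (hfc (k+1)).continuousAt.congr
        have hmem : Ioo (brk b T (k+1)) (brk b T (k+2)) ∈ nhds x :=
          Ioo_mem_nhds hlt hx2
        filter_upwards [hmem] with y hy
        simp only [hgdef]
        rw [seg_eq hb hT (le_of_lt hy.1) hy.2]
  have heq : satN a b T = fun χ => g |χ| := rfl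
  rw [heq]
  exact hg.comp continuous_abs
end

section
/- Suppose (a₁,b₁,T₁) and (a₂,b₂,T₂) are 4-chained. Then for every integer k ≥ 1: s_{2k−1}(b₁,T₁) + T₁·b₁^{2k−1}·arcsin(1/(2b₂²)) < s_{8k−3}(b₂,T₂) + (π/6)·T₂·b₂^{8k−3} and s_{2k}(b₁,T₁) − T₁·b₁^{2k−1}·arcsin(1/(2b₂²)) > s_{8k−2}(b₂,T₂) − (π/6)·T₂·b₂^{8k−3}. -/
open Real Filter Set

/-- Two triples `(a₁,b₁,T₁)`, `(a₂,b₂,T₂)` are 4-chained. -/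
def Chained4 (a₁ b₁ T₁ a₂ b₂ T₂ : ℝ) : Prop :=
  0 < a₂ ∧ 1 < b₂ ∧ 0 < T₂ ∧
    b₁ = b₂ ^ 4 ∧ a₁ = (b₂ ^ 3 / (1 + b₂ + b₂ ^ 2 + b₂ ^ 3)) * a₂ ∧
    T₁ = (1 + b₂ + b₂ ^ 2 + b₂ ^ 3) * T₂

lemma arcsin_lt_pi_div_three_mul {x : ℝ} (h0 : 0 < x) (h1 : x < 1/2) :
    Real.arcsin x < Real.pi / 3 * x := by
  have hA0 : 0 < Real.arcsin x := Real.arcsin_pos.2 h0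
  have hA6 : Real.arcsin x < Real.pi / 6 := by
    rw [Real.arcsin_lt_iff_lt_sin ⟨by linarith, by linarith⟩
      ⟨by nlinarith [Real.pi_pos], by nlinarith [Real.pi_pos]⟩, Real.sin_pi_div_six]
    exact h1
  set A := Real.arcsin x with hAdef
  have hsin : Real.sin A = x := Real.sin_arcsin (by linarith) (by linarith)
  have hpi : (0:ℝ) < Real.pi := Real.pi_pos
  set t : ℝ := A / (Real.pi / 6) with ht
  have ht0 : 0 < t := div_pos hA0 (by linarith)
  have ht1 : t < 1 := (div_lt_one (by linarith)).2 hA6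
  have key := strictConcaveOn_sin_Icc.2 (x := 0) (y := Real.pi / 6)
    ⟨le_rfl, hpi.le⟩ ⟨by linarith, by linarith⟩ (by positivity)
    (sub_pos.2 ht1) ht0 (by ring)
  have hAt : (1 - t) • (0:ℝ) + t • (Real.pi / 6) = A := by
    rw [smul_eq_mul, smul_eq_mul, ht, mul_zero, zero_add, div_mul_cancel₀ _ (by positivity)]
  rw [hAt, Real.sin_zero, Real.sin_pi_div_six, hsin] at key
  have : (1 - t) • (0:ℝ) + t • (1/2 : ℝ) = 3 * A / Real.pi := by
    rw [smul_eq_mul, smul_eq_mul, mul_zero, zero_add, ht]; field_simp; ring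
  rw [this] at key
  rw [div_lt_iff₀ hpi] at key
  nlinarith

lemma brk_chain {b T : ℝ} (hb : 1 < b) (n : ℕ) :
    brk (b ^ 4) ((1 + b + b ^ 2 + b ^ 3) * T) n = brk b T (4 * n) := by
  have h1 : b - 1 ≠ 0 := by linarith
  have h4 : b ^ 4 - 1 ≠ 0 := by
    have : (1:ℝ) < b ^ 4 := one_lt_pow₀ hb (by norm_num)
    linarith
  unfold brk
  rw [← pow_mul]
  field_simp
  ring

lemma brk_step {b T : ℝ} (hb : 1 < b) (n : ℕ) :
    brk b T (n + 1) = brk b T n + T * Real.pi * b ^ n := by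
  have h1 : b - 1 ≠ 0 := by linarith
  unfold brk
  field_simp
  ring

set_option maxHeartbeats 1000000 in
/-- endpoint comparisons between the slow and fast Nussbaum segments. -/
theorem chained_endpoint_comparison (a₁ b₁ T₁ a₂ b₂ T₂ : ℝ)
    (h : Chained4 a₁ b₁ T₁ a₂ b₂ T₂) (k : ℕ) (hk : 1 ≤ k) :
    brk b₁ T₁ (2 * k - 1) + T₁ * b₁ ^ (2 * k - 1) * Real.arcsin (1 / (2 * b₂ ^ 2)) <
      brk b₂ T₂ (8 * k - 3) + (Real.pi / 6) * T₂ * b₂ ^ (8 * k - 3) ∧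
    brk b₂ T₂ (8 * k - 2) - (Real.pi / 6) * T₂ * b₂ ^ (8 * k - 3) <
      brk b₁ T₁ (2 * k) - T₁ * b₁ ^ (2 * k - 1) * Real.arcsin (1 / (2 * b₂ ^ 2)) := by
  obtain ⟨ha2, hb, hT, hb1, ha1, hT1⟩ := h
  obtain ⟨m, rfl⟩ : ∃ m, k = m + 1 := ⟨k - 1, (Nat.succ_pred_eq_of_pos hk).symm⟩
  set b := b₂; set T := T₂
  have hb0 : (0:ℝ) < b := by linarith
  have hpi : (0:ℝ) < Real.pi := Real.pi_pos
  -- arcsin bound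
  have hx0 : (0:ℝ) < 1 / (2 * b ^ 2) := by positivity
  have hx1 : (1:ℝ) / (2 * b ^ 2) < 1 / 2 := by
    rw [div_lt_div_iff₀ (by positivity) (by norm_num)]
    nlinarith
  set A := Real.arcsin (1 / (2 * b ^ 2)) with hA
  have hA0 : 0 < A := Real.arcsin_pos.2 hx0
  have hAle : A < Real.pi / 3 * (1 / (2 * b ^ 2)) := arcsin_lt_pi_div_three_mul hx0 hx1
  have hAkey : 6 * b ^ 2 * A < Real.pi := by
    have h := mul_lt_mul_of_pos_left hAle (show (0:ℝ) < 6 * b ^ 2 by positivity)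
    have h2 : 6 * b ^ 2 * (Real.pi / 3 * (1 / (2 * b ^ 2))) = Real.pi := by
      field_simp
      ring
    rw [h2] at h
    exact h
  -- index arithmetic
  have e1 : 2 * (m + 1) - 1 = 2 * m + 1 := by omega
  have e2 : 8 * (m + 1) - 3 = 8 * m + 5 := by omega
  have e3 : 8 * (m + 1) - 2 = 8 * m + 6 := by omega
  have e4 : 2 * (m + 1) = 2 * m + 2 := by omega
  rw [e1, e2, e3, e4, hb1, hT1]
  rw [brk_chain hb, brk_chain hb]
  have e5 : 4 * (2 * m + 1) = 8 * m + 4 := by omega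
  have e6 : 4 * (2 * m + 2) = 8 * m + 8 := by omega
  rw [e5, e6]
  have hbp : ∀ n : ℕ, (0:ℝ) < b ^ n := fun n => pow_pos hb0 n
  set c := b ^ (8 * m + 4) with hc
  have hc0 : 0 < c := hbp _
  have p5 : b ^ (8 * m + 5) = c * b := by rw [hc, ← pow_succ]
  have p6 : b ^ (8 * m + 6) = c * b ^ 2 := by rw [hc, ← pow_add]
  have p7 : b ^ (8 * m + 7) = c * b ^ 3 := by rw [hc, ← pow_add]
  have pb1 : (b ^ 4 : ℝ) ^ (2 * m + 1) = c := by rw [← pow_mul, hc]; ring_nf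
  have s5 : brk b T (8 * m + 5) = brk b T (8 * m + 4) + T * Real.pi * c := by
    rw [show 8 * m + 5 = (8 * m + 4) + 1 from rfl, brk_step hb]
  have s6 : brk b T (8 * m + 6) = brk b T (8 * m + 4) + T * Real.pi * c
      + T * Real.pi * (c * b) := by
    rw [show 8 * m + 6 = (8 * m + 5) + 1 from rfl, brk_step hb, p5, s5]
  have s8 : brk b T (8 * m + 8) = brk b T (8 * m + 6) + T * Real.pi * (c * b ^ 2)
      + T * Real.pi * (c * b ^ 3) := by
    rw [show 8 * m + 8 = (8 * m + 7) + 1 from rfl, brk_step hb, p7,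
      show 8 * m + 7 = (8 * m + 6) + 1 from rfl, brk_step hb, p6]
  have hTc : 0 < T * c := mul_pos hT hc0
  have H1 := mul_lt_mul_of_pos_left hAkey hTc
  have H2 := mul_lt_mul_of_pos_left hAkey (show (0:ℝ) < T * c * b / 6 by positivity)
  have H3 := mul_lt_mul_of_pos_left hAkey (show (0:ℝ) < T * c * b ^ 2 by positivity)
  have H4 := mul_lt_mul_of_pos_left hAkey (show (0:ℝ) < T * c * b ^ 3 by positivity)
  have HA1 : 0 ≤ (T * c * A) * (5 * b ^ 2 - 1 - b) :=
    mul_nonneg (mul_pos hTc hA0).le (by nlinarith)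
  have HA2 : 0 ≤ (T * c * A) * (6 * b ^ 4 + 6 * b ^ 5 + b ^ 3 - 1 - b - b ^ 2 - b ^ 3) :=
    mul_nonneg (mul_pos hTc hA0).le (by nlinarith)
  constructor
  · rw [pb1, s5, p5]
    nlinarith [H1, H2, HA1]
  · rw [pb1, s8, p5]
    nlinarith [H2, H3, H4, HA2]
end
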